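/- For all x > 0, Γ(2x)/Γ(x) ≤ 2^{2x − 1/2} · (x/e)^x. -/

import Mathlib

open Real Filter Finset

private lemma hasDeriv_aux (x : ℝ) (h1x : (1:ℝ) + x ≠ 0) (h2x : (2:ℝ) + x ≠ 0) :
    HasDerivAt (fun u : ℝ => Real.log (1 + u) - 2 * u / (2 + u))
      (1 / (1 + x) - 4 / (2 + x) ^ 2) x := by
  have hlog : HasDerivAt (fun u : ℝ => Real.log (1 + u)) (1 / (1 + x)) x := by
    simpa using (HasDerivAt.log ((hasDerivAt_id x).const_add 1) h1x)
  have hdiv : HasDerivAt (fun u : ℝ => 2 * u / (2 + u)) (4 / (2 + x) ^ 2) x := by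
    have := HasDerivAt.div ((hasDerivAt_id x).const_mul 2)
      ((hasDerivAt_id x).const_add 2) h2x
    simp only [id_eq, mul_one, Pi.div_def] at this
    rw [show (4:ℝ) / (2 + x) ^ 2 = (2 * (2 + x) - 2 * x) / (2 + x) ^ 2 by ring]
    exact this
  exact hlog.sub hdiv

private lemma logineq {u : ℝ} (hu : 0 ≤ u) : 2 * u / (2 + u) ≤ Real.log (1 + u) := by
  have key : MonotoneOn (fun u : ℝ => Real.log (1 + u) - 2 * u / (2 + u)) (Set.Ici 0) := by
    apply monotoneOn_of_deriv_nonneg (convex_Ici 0)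
    · apply ContinuousOn.sub
      · exact ContinuousOn.log (by fun_prop) (fun x hx => by
          simp only [Set.mem_Ici] at hx; positivity)
      · exact ContinuousOn.div (by fun_prop) (by fun_prop) (fun x hx => by
          simp only [Set.mem_Ici] at hx; positivity)
    · intro x hx
      rw [interior_Ici, Set.mem_Ioi] at hx
      exact (hasDeriv_aux x (by positivity) (by positivity)).differentiableAt.differentiableWithinAt
    · intro x hx
      rw [interior_Ici, Set.mem_Ioi] at hx
      rw [(hasDeriv_aux x (by positivity) (by positivity)).deriv]
      rw [sub_nonneg, div_le_div_iff₀ (by positivity) (by positivity)]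
      nlinarith
  have := key Set.self_mem_Ici (Set.mem_Ici.mpr hu) hu
  simpa using this

private noncomputable def ff (y : ℝ) : ℝ :=
  1 + Real.log (y + 1/2) + y * Real.log y - (y + 1) * Real.log (y + 1)

private lemma ff_hasDeriv {y : ℝ} (hy : 0 < y) :
    HasDerivAt ff (1 / (y + 1/2) + Real.log y - Real.log (y + 1)) y := by
  have h1 : HasDerivAt (fun z : ℝ => Real.log (z + 1/2)) (1 / (y + 1/2)) y := by
    simpa using HasDerivAt.log ((hasDerivAt_id y).add_const (1/2)) (by positivity : y + 1/2 ≠ 0)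
  have h2 : HasDerivAt (fun z : ℝ => z * Real.log z) (Real.log y + 1) y := by
    have := (hasDerivAt_id y).mul (Real.hasDerivAt_log hy.ne')
    simpa [Pi.mul_def, mul_comm, add_comm, mul_inv_cancel₀ hy.ne'] using this
  have h3 : HasDerivAt (fun z : ℝ => (z + 1) * Real.log (z + 1)) (Real.log (y + 1) + 1) y := by
    have := ((hasDerivAt_id y).add_const 1).mul
      (HasDerivAt.log ((hasDerivAt_id y).add_const 1) (by positivity : y + 1 ≠ 0))
    simpa [Pi.mul_def, mul_inv_cancel₀ (by positivity : (y:ℝ) + 1 ≠ 0), mul_div_assoc,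
      div_self (by positivity : (y:ℝ) + 1 ≠ 0)] using this
  have key := ((h1.const_add 1).add h2).sub h3
  have heq : 1 / (y + 1/2) + Real.log y - Real.log (y + 1)
      = 1 / (y + 1/2) + (Real.log y + 1) - (Real.log (y + 1) + 1) := by ring
  rw [heq]
  exact key

private lemma ff_deriv_nonpos {y : ℝ} (hy : 0 < y) :
    1 / (y + 1/2) + Real.log y - Real.log (y + 1) ≤ 0 := by
  have h := logineq (le_of_lt (by positivity : (0:ℝ) < 1/y))
  have h1 : (1:ℝ) + 1/y = (y+1)/y := by field_simp
  have h2 : 2 * (1/y) / (2 + 1/y) = 1 / (y + 1/2) := by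
    rw [div_eq_div_iff (by positivity) (by positivity)]
    field_simp
  rw [h1, h2, Real.log_div (by positivity) hy.ne'] at h
  linarith

private lemma ff_antitoneOn : AntitoneOn ff (Set.Ioi 0) := by
  apply antitoneOn_of_deriv_nonpos (convex_Ioi 0)
  · intro z hz
    exact (ff_hasDeriv hz).continuousAt.continuousWithinAt
  · intro z hz
    rw [interior_Ioi] at hz
    exact (ff_hasDeriv hz).differentiableAt.differentiableWithinAt
  · intro z hz
    rw [interior_Ioi] at hz
    rw [(ff_hasDeriv hz).deriv]
    exact ff_deriv_nonpos hz

private lemma ff_tendsto : Tendsto ff atTop (nhds 0) := by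
  have T2 : Tendsto (fun y : ℝ => y * (Real.log (y+1) - Real.log y)) atTop (nhds 1) := by
    apply (Real.tendsto_mul_log_one_add_div_atTop 1).congr'
    filter_upwards [eventually_gt_atTop (0:ℝ)] with y hy
    rw [show (1:ℝ) + 1/y = (y+1)/y by field_simp, Real.log_div (by positivity) hy.ne']
  have hinv : Tendsto (fun y : ℝ => (y+1)⁻¹) atTop (nhds 0) :=
    tendsto_inv_atTop_zero.comp (tendsto_atTop_add_const_right _ 1 tendsto_id)
  have hb : Tendsto (fun y : ℝ => (y+1/2)/(y+1)) atTop (nhds 1) := by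
    have : Tendsto (fun y : ℝ => 1 - (1/2) * (y+1)⁻¹) atTop (nhds (1 - (1/2) * 0)) :=
      tendsto_const_nhds.sub (tendsto_const_nhds.mul hinv)
    simp only [mul_zero, sub_zero] at this
    apply this.congr'
    filter_upwards [eventually_gt_atTop (0:ℝ)] with y hy
    field_simp
    ring
  have T1 : Tendsto (fun y : ℝ => Real.log (y+1/2) - Real.log (y+1)) atTop (nhds 0) := by
    have hc : Tendsto (fun y : ℝ => Real.log ((y+1/2)/(y+1))) atTop (nhds 0) := by
      have := (Real.continuousAt_log one_ne_zero).tendsto.comp hb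
      simpa [Function.comp_def] using this
    apply hc.congr'
    filter_upwards [eventually_gt_atTop (0:ℝ)] with y hy
    rw [Real.log_div (by positivity) (by positivity)]
  have : Tendsto (fun y : ℝ => 1 + (Real.log (y+1/2) - Real.log (y+1))
      - y * (Real.log (y+1) - Real.log y)) atTop (nhds (1 + 0 - 1)) :=
    (tendsto_const_nhds.add T1).sub T2
  simp only [add_zero, sub_self] at this
  apply this.congr
  intro y
  simp only [ff]
  ring

private lemma ff_nonneg {y : ℝ} (hy : 0 < y) : 0 ≤ ff y := by
  have hseq : Tendsto (fun n : ℕ => ff (y + n)) atTop (nhds 0) :=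
    ff_tendsto.comp (tendsto_atTop_add_const_left _ y tendsto_natCast_atTop_atTop)
  apply le_of_tendsto hseq
  filter_upwards with n
  exact ff_antitoneOn (Set.mem_Ioi.mpr hy)
    (Set.mem_Ioi.mpr (by positivity)) (by simp [le_add_iff_nonneg_right, n.cast_nonneg])

private noncomputable def Gfun (y : ℝ) : ℝ := Real.Gamma (y + 1/2) * (Real.exp 1 / y) ^ y

private lemma Gfun_step {y : ℝ} (hy : 0 < y) : Gfun y ≤ Gfun (y + 1) := by
  have hΓ : 0 < Real.Gamma (y + 1/2) := Real.Gamma_pos_of_pos (by linarith)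
  have hΓ' : Real.Gamma (y + 1 + 1/2) = (y + 1/2) * Real.Gamma (y + 1/2) := by
    rw [show y + 1 + 1/2 = (y + 1/2) + 1 by ring, Real.Gamma_add_one (by positivity)]
  unfold Gfun
  rw [hΓ', show (y + 1/2) * Real.Gamma (y + 1/2) * (Real.exp 1 / (y+1)) ^ (y+1)
    = Real.Gamma (y + 1/2) * ((y + 1/2) * (Real.exp 1 / (y+1)) ^ (y+1)) from by ring]
  apply mul_le_mul_of_nonneg_left _ hΓ.le
  have hl : (0:ℝ) < (Real.exp 1 / y) ^ y := Real.rpow_pos_of_pos (by positivity) _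
  have hr : (0:ℝ) < (y + 1/2) * (Real.exp 1 / (y+1)) ^ (y+1) :=
    mul_pos (by linarith) (Real.rpow_pos_of_pos (by positivity) _)
  rw [← Real.log_le_log_iff hl hr]
  rw [Real.log_rpow (by positivity), Real.log_mul (by positivity) (by positivity),
    Real.log_rpow (by positivity), Real.log_div (Real.exp_ne_zero 1) hy.ne',
    Real.log_div (Real.exp_ne_zero 1) (by positivity), Real.log_exp]
  have := ff_nonneg hy
  unfold ff at this
  nlinarith [this]

private lemma Gamma_prod {s : ℝ} (hs : 0 < s) (n : ℕ) :
    Real.Gamma (s + n) = Real.Gamma s * ∏ j ∈ Finset.range n, (s + j) := by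
  induction n with
  | zero => simp
  | succ n ih =>
    have h : s + (n+1 : ℕ) = (s + n) + 1 := by push_cast; ring
    rw [h, Real.Gamma_add_one (by positivity), ih, Finset.prod_range_succ]
    ring

private lemma prod_pos' {s : ℝ} (hs : 0 < s) (n : ℕ) :
    0 < ∏ j ∈ Finset.range n, (s + (j:ℝ)) :=
  Finset.prod_pos fun j _ => by positivity

private lemma GammaSeq_pos {s : ℝ} (hs : 0 < s) {n : ℕ} (hn : 1 ≤ n) :
    0 < Real.GammaSeq s n := by
  unfold Real.GammaSeq
  have h1 : (0:ℝ) < (n:ℝ) ^ s := Real.rpow_pos_of_pos (by exact_mod_cast hn) _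
  have h2 : (0:ℝ) < (n.factorial : ℝ) := by exact_mod_cast n.factorial_pos
  exact div_pos (mul_pos h1 h2) (prod_pos' hs _)

private lemma Gfun_eq {x : ℝ} (hx : 0 < x) {n : ℕ} (hn : 1 ≤ n) :
    Gfun (x + 1 + n) = (Real.Gamma (x + 1/2) / Real.GammaSeq (x + 1/2) n)
      * Stirling.stirlingSeq n
      * (Real.sqrt 2 * Real.exp (x + 1)
         * Real.exp ((x + 1 + n) * (Real.log n - Real.log (x + 1 + n)))) := by
  set s : ℝ := x + 1/2 with hs
  have hspos : 0 < s := by rw [hs]; linarith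
  have hnR : (0:ℝ) < (n:ℝ) := by exact_mod_cast hn
  have hy : (0:ℝ) < x + 1 + n := by positivity
  have hstep : x + 1 + (n:ℝ) + 1/2 = s + ((n + 1 : ℕ) : ℝ) := by push_cast; rw [hs]; ring
  have hP : Real.Gamma (x + 1 + n + 1/2)
      = Real.Gamma s * ∏ j ∈ Finset.range (n+1), (s + j) := by
    rw [hstep, Gamma_prod hspos]
  have hPval : ∏ j ∈ Finset.range (n+1), (s + (j:ℝ))
      = (n:ℝ) ^ s * n.factorial / Real.GammaSeq s n := by
    rw [eq_div_iff (GammaSeq_pos hspos hn).ne']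
    unfold Real.GammaSeq
    field_simp [(prod_pos' hspos (n+1)).ne']
  have hfact : (n.factorial : ℝ)
      = Stirling.stirlingSeq n * (Real.sqrt (2 * n) * ((n:ℝ) / Real.exp 1) ^ (n:ℕ)) := by
    unfold Stirling.stirlingSeq
    have hd : (0:ℝ) < Real.sqrt (2 * n) * ((n:ℝ) / Real.exp 1) ^ (n:ℕ) := by positivity
    field_simp
  have E : (n:ℝ) ^ s * (Real.sqrt (2 * n) * ((n:ℝ) / Real.exp 1) ^ (n:ℕ))
      * (Real.exp 1 / (x + 1 + n)) ^ ((x:ℝ) + 1 + n)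
      = Real.sqrt 2 * Real.exp (x + 1)
        * Real.exp ((x + 1 + n) * (Real.log n - Real.log (x + 1 + n))) := by
    rw [Real.rpow_def_of_pos hnR,
      Real.sqrt_eq_rpow, Real.rpow_def_of_pos (by positivity : (0:ℝ) < 2 * n),
      Real.log_mul two_ne_zero hnR.ne',
      ← Real.rpow_natCast ((n:ℝ) / Real.exp 1) n,
      Real.rpow_def_of_pos (by positivity : (0:ℝ) < (n:ℝ) / Real.exp 1),
      Real.log_div hnR.ne' (Real.exp_ne_zero 1), Real.log_exp,
      Real.rpow_def_of_pos (by positivity : (0:ℝ) < Real.exp 1 / (x + 1 + n)),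
      Real.log_div (Real.exp_ne_zero 1) hy.ne', Real.log_exp,
      Real.sqrt_eq_rpow, Real.rpow_def_of_pos (by norm_num : (0:ℝ) < 2)]
    simp only [← Real.exp_add]
    rw [Real.exp_eq_exp, hs]
    ring
  unfold Gfun
  rw [hP, hPval, hfact]
  calc Real.Gamma s * ((n:ℝ) ^ s * (Stirling.stirlingSeq n
          * (Real.sqrt (2 * n) * ((n:ℝ) / Real.exp 1) ^ (n:ℕ))) / Real.GammaSeq s n)
        * (Real.exp 1 / (x + 1 + n)) ^ ((x:ℝ) + 1 + n)
      = (Real.Gamma s / Real.GammaSeq s n) * Stirling.stirlingSeq n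
        * ((n:ℝ) ^ s * (Real.sqrt (2 * n) * ((n:ℝ) / Real.exp 1) ^ (n:ℕ))
           * (Real.exp 1 / (x + 1 + n)) ^ ((x:ℝ) + 1 + n)) := by ring
    _ = _ := by rw [E]

private lemma Gfun_tendsto {x : ℝ} (hx : 0 < x) :
    Tendsto (fun n : ℕ => Gfun (x + 1 + n)) atTop (nhds (Real.sqrt (2 * Real.pi))) := by
  set s : ℝ := x + 1/2 with hs
  have hspos : 0 < s := by rw [hs]; linarith
  have hΓpos := Real.Gamma_pos_of_pos hspos
  set c : ℝ := x + 1 with hc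
  have hcpos : 0 < c := by rw [hc]; linarith
  have hA : Tendsto (fun n : ℕ => Real.Gamma s / Real.GammaSeq s n) atTop (nhds 1) := by
    have := (tendsto_const_nhds : Tendsto (fun _ : ℕ => Real.Gamma s) atTop _).div
      (Real.GammaSeq_tendsto_Gamma s) hΓpos.ne'
    simpa [Pi.div_def, div_self hΓpos.ne'] using this
  have h1 : Tendsto (fun n : ℕ => (n:ℝ) * Real.log (1 + c / n)) atTop (nhds c) :=
    (Real.tendsto_mul_log_one_add_div_atTop c).comp tendsto_natCast_atTop_atTop
  have h2 : Tendsto (fun n : ℕ => Real.log (1 + c / n)) atTop (nhds 0) := by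
    have hbase : Tendsto (fun n : ℕ => 1 + c / n) atTop (nhds 1) := by
      have := tendsto_const_div_atTop_nhds_zero_nat c
      simpa using tendsto_const_nhds.add this
    have := (Real.continuousAt_log one_ne_zero).tendsto.comp hbase
    simpa [Function.comp_def] using this
  have hinner : Tendsto (fun n : ℕ => (x + 1 + n) * (Real.log n - Real.log (x + 1 + n)))
      atTop (nhds (-c)) := by
    have hsum : Tendsto (fun n : ℕ => -((n:ℝ) * Real.log (1 + c / n) + c * Real.log (1 + c / n)))
        atTop (nhds (-(c + c * 0))) := (h1.add (tendsto_const_nhds.mul h2)).neg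
    simp only [mul_zero, add_zero] at hsum
    apply hsum.congr'
    filter_upwards [eventually_ge_atTop 1] with n hn
    have hnR : (0:ℝ) < (n:ℝ) := by exact_mod_cast hn
    have hyn : (0:ℝ) < x + 1 + n := by positivity
    have hl : Real.log (1 + c / n) = Real.log (x + 1 + n) - Real.log n := by
      rw [show (1:ℝ) + c / n = (x + 1 + n) / n by rw [hc]; field_simp; ring,
        Real.log_div hyn.ne' hnR.ne']
    rw [hl, hc]
    ring
  have hC : Tendsto (fun n : ℕ =>
      Real.exp ((x + 1 + n) * (Real.log n - Real.log (x + 1 + n)))) atTop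
      (nhds (Real.exp (-c))) := (Real.continuous_exp.tendsto _).comp hinner
  have htot := (hA.mul Stirling.tendsto_stirlingSeq_sqrt_pi).mul
    ((tendsto_const_nhds : Tendsto (fun _ : ℕ => Real.sqrt 2 * Real.exp c) atTop _).mul hC)
  have hval : 1 * Real.sqrt Real.pi * (Real.sqrt 2 * Real.exp c * Real.exp (-c))
      = Real.sqrt (2 * Real.pi) := by
    rw [mul_assoc (Real.sqrt 2), ← Real.exp_add, add_neg_cancel, Real.exp_zero,
      Real.sqrt_mul (by norm_num : (0:ℝ) ≤ 2)]
    ring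
  rw [hval] at htot
  apply htot.congr'
  filter_upwards [eventually_ge_atTop 1] with n hn
  rw [Gfun_eq hx hn, hs, hc]

private lemma Gamma_add_half_le {x : ℝ} (hx : 0 < x) :
    Real.Gamma (x + 1/2) ≤ Real.sqrt (2 * Real.pi) * (x / Real.exp 1) ^ x := by
  have hchain : ∀ n : ℕ, Gfun x ≤ Gfun (x + 1 + n) := by
    intro n
    induction n with
    | zero => simpa using Gfun_step hx
    | succ n ih =>
      refine le_trans ih (le_of_le_of_eq (Gfun_step (by positivity)) ?_)
      congr 1
      push_cast
      ring
  have hG : Gfun x ≤ Real.sqrt (2 * Real.pi) :=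
    ge_of_tendsto (Gfun_tendsto hx) (Eventually.of_forall hchain)
  have hone : (Real.exp 1 / x) ^ x * (x / Real.exp 1) ^ x = 1 := by
    rw [← Real.mul_rpow (by positivity) (by positivity),
      show Real.exp 1 / x * (x / Real.exp 1) = 1 from by field_simp, Real.one_rpow]
  calc Real.Gamma (x + 1/2) = Gfun x * (x / Real.exp 1) ^ x := by
        unfold Gfun; rw [mul_assoc, hone, mul_one]
    _ ≤ Real.sqrt (2 * Real.pi) * (x / Real.exp 1) ^ x :=
        mul_le_mul_of_nonneg_right hG (Real.rpow_nonneg (by positivity) x)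

theorem gamma_ratio_bound (x : ℝ) (hx : 0 < x) :
    Real.Gamma (2 * x) / Real.Gamma x
      ≤ (2 : ℝ) ^ (2 * x - 1/2) * (x / Real.exp 1) ^ x := by
  have hΓx : 0 < Real.Gamma x := Real.Gamma_pos_of_pos hx
  have hdup := Real.Gamma_mul_Gamma_add_half x
  have hpos2 : (0:ℝ) < (2:ℝ) ^ (1 - 2*x) * Real.sqrt Real.pi :=
    mul_pos (Real.rpow_pos_of_pos (by norm_num) _) (Real.sqrt_pos.mpr Real.pi_pos)
  have hmain : Real.Gamma x * Real.Gamma (x + 1/2)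
      ≤ Real.Gamma x * (Real.sqrt (2 * Real.pi) * (x / Real.exp 1) ^ x) :=
    mul_le_mul_of_nonneg_left (Gamma_add_half_le hx) hΓx.le
  have hid : (2:ℝ) ^ (2*x - 1/2) * ((2:ℝ) ^ (1 - 2*x) * Real.sqrt Real.pi)
      = Real.sqrt (2 * Real.pi) := by
    rw [← mul_assoc, ← Real.rpow_add (by norm_num : (0:ℝ) < 2),
      show 2*x - 1/2 + (1 - 2*x) = (1:ℝ)/2 from by ring, ← Real.sqrt_eq_rpow,
      Real.sqrt_mul (by norm_num : (0:ℝ) ≤ 2)]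
  rw [div_le_iff₀ hΓx, ← mul_le_mul_iff_of_pos_right hpos2]
  calc Real.Gamma (2*x) * ((2:ℝ) ^ (1 - 2*x) * Real.sqrt Real.pi)
      = Real.Gamma x * Real.Gamma (x + 1/2) := by rw [hdup]; ring
    _ ≤ Real.Gamma x * (Real.sqrt (2 * Real.pi) * (x / Real.exp 1) ^ x) := hmain
    _ = (2:ℝ) ^ (2*x - 1/2) * (x / Real.exp 1) ^ x * Real.Gamma x
        * ((2:ℝ) ^ (1 - 2*x) * Real.sqrt Real.pi) := by rw [← hid]; ring
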